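/- Fix a nonempty k-local property P = P(F) of [n]^d-arrays over Σ, an [n]^d-array A over Σ, and an (n,d,k,w)-system of grids (G_0,...,G_r), and let W be the family of all maximal (P,A)-witness blocks. Then there exists an [n]^d-array A' over Σ satisfying P such that A'(x) = A(x) for every x ∉ ⋃_{B∈W} Par(B). -/

import Mathlib

open Finset

/-- `I[:ℓ]`: the set of the `ℓ` smallest elements of `I` (or `I` itself if `|I| < ℓ`). -/
def takeSmallest (I : Finset ℕ) (ℓ : ℕ) : Finset ℕ :=
  I.filter fun x => (I.filter fun y => y ≤ x).card ≤ ℓ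

/-- `I[ℓ+1:] = I \ I[:ℓ]`. -/
def dropSmallest (I : Finset ℕ) (ℓ : ℕ) : Finset ℕ :=
  I \ takeSmallest I ℓ

/-- An `(n,w)`-interval partition: a partition of `[n] = {1,…,n}` into consecutive,
pairwise disjoint intervals `I_1, …, I_t`, each of size `w` or `w+1`, where for `j < j'`
every element of `I j` is smaller than every element of `I j'`. -/
structure IntervalPartition (n w : ℕ) where
  t : ℕ
  I : Fin t → Finset ℕ
  interval : ∀ j, ∃ a b, 1 ≤ a ∧ a ≤ b ∧ b ≤ n ∧ I j = Finset.Icc a b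
  size : ∀ j, (I j).card = w ∨ (I j).card = w + 1
  cover : ∀ x ∈ Finset.Icc 1 n, ∃ j, x ∈ I j
  ordered : ∀ j j' : Fin t, j < j' → ∀ x ∈ I j, ∀ y ∈ I j', x < y

/-- The hypergrid `[n]^d`, as a set of tuples. -/
def cube (n d : ℕ) : Set (Fin d → ℕ) :=
  {x | ∀ i, 1 ≤ x i ∧ x i ≤ n}

/-- The `(n,d,k,w)`-grid induced by an `(n,w)`-interval partition. -/
def gridOf (n d k w : ℕ) (P : IntervalPartition n w) : Set (Fin d → ℕ) :=
  {x ∈ cube n d | ∃ i : Fin d, ∃ j : Fin P.t, x i ∈ takeSmallest (P.I j) (k - 1)}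

/-- `G ∈ 𝒢(n,d,k,w)`: `G` is the grid induced by some `(n,w)`-interval partition. -/
def IsGrid (n d k w : ℕ) (G : Set (Fin d → ℕ)) : Prop :=
  ∃ P : IntervalPartition n w, G = gridOf n d k w P

/-- Two entries of `[n]^d` are neighbors if `∑ i, |x i − y i| = 1`. -/
def Neighbor {d : ℕ} (x y : Fin d → ℕ) : Prop :=
  (∑ i, Nat.dist (x i) (y i)) = 1

/-- A `G`-block: a connected component of the neighborhood graph on `[n]^d \ G`. -/
def IsBlock (n d : ℕ) (G B : Set (Fin d → ℕ)) : Prop :=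
  B.Nonempty ∧ B ⊆ cube n d \ G ∧
    (∀ x ∈ B, ∀ y ∈ B,
      Relation.ReflTransGen
        (fun a b => a ∈ cube n d \ G ∧ b ∈ cube n d \ G ∧ Neighbor a b) x y) ∧
    (∀ x ∈ B, ∀ y, y ∈ cube n d \ G → Neighbor x y → y ∈ B)

/-- The closure `B̄` of a block `B`. -/
def blockClosure (n d k : ℕ) (B : Set (Fin d → ℕ)) : Set (Fin d → ℕ) :=
  {x ∈ cube n d | ∃ y ∈ B, ∀ i, Nat.dist (x i) (y i) < k}

/-- The boundary `∂B = B̄ \ B` of a block `B`. -/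
def blockBoundary (n d k : ℕ) (B : Set (Fin d → ℕ)) : Set (Fin d → ℕ) :=
  blockClosure n d k B \ B

/-- A valid location of a width-`k` subarray in `[n]^d`: an element of `[n−k+1]^d`. -/
def ValidLoc (n d k : ℕ) (a : Fin d → ℕ) : Prop :=
  ∀ i, 1 ≤ a i ∧ a i ≤ n - k + 1

/-- The width-`k` box with lowest corner `a`: `{a_1,…,a_1+k−1} × ⋯ × {a_d,…,a_d+k−1}`. -/
def kbox (d k : ℕ) (a : Fin d → ℕ) : Set (Fin d → ℕ) :=
  {x | ∀ i, a i ≤ x i ∧ x i ≤ a i + k - 1}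

/-- Some forbidden pattern of `F` occurs as a consecutive subarray of `A` at location `a`;
patterns are compared on `[k]^d`. -/
def HasCopyAt {σ : Type*} (d k : ℕ) (F : Set ((Fin d → ℕ) → σ))
    (A : (Fin d → ℕ) → σ) (a : Fin d → ℕ) : Prop :=
  ∃ S ∈ F, ∀ j : Fin d → ℕ, (∀ i, 1 ≤ j i ∧ j i ≤ k) →
    A (fun i => a i + j i - 1) = S j

/-- `A` contains an `F`-copy lying inside the set `X`. -/
def HasCopyIn {σ : Type*} (n d k : ℕ) (F : Set ((Fin d → ℕ) → σ))
    (A : (Fin d → ℕ) → σ) (X : Set (Fin d → ℕ)) : Prop :=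
  ∃ a, ValidLoc n d k a ∧ HasCopyAt d k F A a ∧ kbox d k a ⊆ X

/-- `A` satisfies the `k`-local property `P(F)`: it contains no `F`-copy. -/
def SatisfiesP {σ : Type*} (n d k : ℕ) (F : Set ((Fin d → ℕ) → σ))
    (A : (Fin d → ℕ) → σ) : Prop :=
  ¬ ∃ a, ValidLoc n d k a ∧ HasCopyAt d k F A a

/-- `A` is `ε`-far from `P(F)`: every array satisfying `P(F)` differs from `A`
in at least `ε·n^d` entries of `[n]^d`. -/
def FarFrom {σ : Type*} (n d k : ℕ) (F : Set ((Fin d → ℕ) → σ)) (ε : ℝ)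
    (A : (Fin d → ℕ) → σ) : Prop :=
  ∀ A' : (Fin d → ℕ) → σ, SatisfiesP n d k F A' →
    ε * (n : ℝ) ^ d ≤ ({x | x ∈ cube n d ∧ A x ≠ A' x}).ncard

/-- A block `B` is `(P,A)`-unrepairable: every array agreeing with `A` on `∂B`
(including `A` itself) contains an `F`-copy lying inside `B̄`. -/
def Unrepairable {σ : Type*} (n d k : ℕ) (F : Set ((Fin d → ℕ) → σ))
    (A : (Fin d → ℕ) → σ) (B : Set (Fin d → ℕ)) : Prop :=
  ∀ A' : (Fin d → ℕ) → σ, (∀ x ∈ blockBoundary n d k B, A' x = A x) →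
    HasCopyIn n d k F A' (blockClosure n d k B)

/-- `r = ⌊log₂(n/w)⌋`. -/
def sysR (n w : ℕ) : ℕ := Nat.log 2 (n / w)

/-- An `(n,d,k,w)`-system of grids `(G_0, …, G_r)` with `r = ⌊log₂(n/w)⌋`:
`G_i ∈ 𝒢(n,d,k,⌊n/2^(r−i)⌋)` and `G_0 ⊇ G_1 ⊇ ⋯ ⊇ G_r`. -/
structure GridSystem (n d k w : ℕ) where
  G : ℕ → Set (Fin d → ℕ)
  isGrid : ∀ i ≤ sysR n w, IsGrid n d k (n / 2 ^ (sysR n w - i)) (G i)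
  nested : ∀ i j : ℕ, j ≤ i → i ≤ sysR n w → G i ⊆ G j

/-- A `G_i`-block `B` is a `(P,A)`-witness: either `i = 0` and `A` contains an `F`-copy
inside `B̄`, or `i > 0` and `B` is `(P,A)`-unrepairable. -/
def IsWitness {σ : Type*} (n d k w : ℕ) (S : GridSystem n d k w)
    (F : Set ((Fin d → ℕ) → σ)) (A : (Fin d → ℕ) → σ)
    (i : ℕ) (B : Set (Fin d → ℕ)) : Prop :=
  i ≤ sysR n w ∧ IsBlock n d (S.G i) B ∧
    ((i = 0 ∧ HasCopyIn n d k F A (blockClosure n d k B)) ∨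
      (0 < i ∧ Unrepairable n d k F A B))

/-- A witness is maximal if all of its ancestors (blocks of coarser grids containing it)
are `(P,A)`-repairable. -/
def IsMaximalWitness {σ : Type*} (n d k w : ℕ) (S : GridSystem n d k w)
    (F : Set ((Fin d → ℕ) → σ)) (A : (Fin d → ℕ) → σ)
    (i : ℕ) (B : Set (Fin d → ℕ)) : Prop :=
  IsWitness n d k w S F A i B ∧
    ∀ j, i < j → j ≤ sysR n w → ∀ B', IsBlock n d (S.G j) B' → B ⊆ B' →
      ¬ Unrepairable n d k F A B'

/-- The family `W` of all maximal `(P,A)`-witness blocks. -/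
def MaxWitnessFamily {σ : Type*} (n d k w : ℕ) (S : GridSystem n d k w)
    (F : Set ((Fin d → ℕ) → σ)) (A : (Fin d → ℕ) → σ) :
    Set (Set (Fin d → ℕ)) :=
  {B | ∃ i, IsMaximalWitness n d k w S F A i B}

/-- `Par(B)` for a `G_i`-block `B`: the `G_{i+1}`-block containing `B` if `i < r`
(expressed as the union of all such blocks, of which there is exactly one), and
`[n]^d` for `i = r`. -/
def parentSet (n d k w : ℕ) (S : GridSystem n d k w) (i : ℕ)
    (B : Set (Fin d → ℕ)) : Set (Fin d → ℕ) :=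
  if i = sysR n w then cube n d
  else ⋃₀ {B' | IsBlock n d (S.G (i + 1)) B' ∧ B ⊆ B'}

section RepairAux

open Relation

variable {n d k : ℕ}

lemma natDist_def (a b : ℕ) : Nat.dist a b = a - b + (b - a) := rfl

lemma mem_takeSmallest_Icc {a b ℓ v : ℕ} :
    v ∈ takeSmallest (Finset.Icc a b) ℓ ↔ a ≤ v ∧ v ≤ b ∧ v + 1 ≤ a + ℓ := by
  have hfe : (Finset.Icc a b).filter (fun y => y ≤ v) = Finset.Icc a (min b v) := by
    ext z
    simp only [Finset.mem_filter, Finset.mem_Icc]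
    omega
  unfold takeSmallest
  simp only [Finset.mem_filter, Finset.mem_Icc, hfe, Nat.card_Icc]
  omega

lemma takeSmallest_subset (I : Finset ℕ) (ℓ : ℕ) : takeSmallest I ℓ ⊆ I :=
  Finset.filter_subset _ _

lemma neighbor_symm {x y : Fin d → ℕ} (h : Neighbor x y) : Neighbor y x := by
  unfold Neighbor at *
  rw [← h]
  exact Finset.sum_congr rfl fun i _ => Nat.dist_comm _ _

lemma neighbor_update (x : Fin d → ℕ) (i0 : Fin d) (m : ℕ) (h : Nat.dist (x i0) m = 1) :
    Neighbor x (Function.update x i0 m) := by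
  unfold Neighbor
  have h1 : ∀ i, Nat.dist (x i) (Function.update x i0 m i) = if i = i0 then 1 else 0 := by
    intro i
    by_cases hi : i = i0
    · subst hi; simp [Function.update_self, h]
    · simp [Function.update_of_ne hi, Nat.dist_self, hi]
  rw [Finset.sum_congr rfl fun i _ => h1 i]
  simp

def compBlock (n d : ℕ) (G : Set (Fin d → ℕ)) (t : Fin d → ℕ) : Set (Fin d → ℕ) :=
  {y | y ∈ cube n d \ G ∧ Relation.ReflTransGen
    (fun a b => a ∈ cube n d \ G ∧ b ∈ cube n d \ G ∧ Neighbor a b) t y}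

lemma stepRel_symm {G : Set (Fin d → ℕ)} :
    Symmetric (fun a b => a ∈ cube n d \ G ∧ b ∈ cube n d \ G ∧ Neighbor a b) :=
  fun _ _ ⟨h1, h2, h3⟩ => ⟨h2, h1, neighbor_symm h3⟩

lemma mem_of_path {G B : Set (Fin d → ℕ)} (hB : IsBlock n d G B) {x y : Fin d → ℕ}
    (hx : x ∈ B)
    (h : Relation.ReflTransGen
      (fun a b => a ∈ cube n d \ G ∧ b ∈ cube n d \ G ∧ Neighbor a b) x y) :
    y ∈ B := by
  induction h with
  | refl => exact hx
  | tail _ hstep ih => exact hB.2.2.2 _ ih _ hstep.2.1 hstep.2.2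

lemma compBlock_isBlock {G : Set (Fin d → ℕ)} {t : Fin d → ℕ} (ht : t ∈ cube n d \ G) :
    IsBlock n d G (compBlock n d G t) := by
  refine ⟨⟨t, ht, .refl⟩, fun y hy => hy.1, ?_, ?_⟩
  · intro x hx y hy
    exact (@Std.Symm.symm _ _ (@Relation.ReflTransGen.stdSymm _ _ ⟨fun a b h => stepRel_symm (n := n) (d := d) (G := G) h⟩) _ _ hx.2).trans hy.2
  · intro x hx y hyG hnb
    exact ⟨hyG, hx.2.tail ⟨hx.1, hyG, hnb⟩⟩

lemma mem_compBlock_self {G : Set (Fin d → ℕ)} {t : Fin d → ℕ} (ht : t ∈ cube n d \ G) :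
    t ∈ compBlock n d G t := ⟨ht, .refl⟩

lemma block_eq_compBlock {G B : Set (Fin d → ℕ)} (hB : IsBlock n d G B) {t} (ht : t ∈ B) :
    B = compBlock n d G t := by
  ext y
  constructor
  · intro hy; exact ⟨hB.2.1 hy, hB.2.2.1 t ht y hy⟩
  · intro hy; exact mem_of_path hB ht hy.2

lemma block_eq_of_mem {G B1 B2 : Set (Fin d → ℕ)} (h1 : IsBlock n d G B1)
    (h2 : IsBlock n d G B2) {t} (ht1 : t ∈ B1) (ht2 : t ∈ B2) : B1 = B2 := by
  rw [block_eq_compBlock h1 ht1, block_eq_compBlock h2 ht2]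

lemma block_subset_compBlock {G G' B : Set (Fin d → ℕ)} (hB : IsBlock n d G B)
    (hGG : cube n d \ G ⊆ cube n d \ G') {t} (ht : t ∈ B) :
    B ⊆ compBlock n d G' t := by
  intro y hy
  refine ⟨hGG (hB.2.1 hy), ?_⟩
  exact Relation.ReflTransGen.mono (fun a b (hab : a ∈ cube n d \ G ∧ b ∈ cube n d \ G ∧ Neighbor a b) => (⟨hGG hab.1, hGG hab.2.1, hab.2.2⟩ : a ∈ cube n d \ G' ∧ b ∈ cube n d \ G' ∧ Neighbor a b))
    _ _ (hB.2.2.1 t ht y hy)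

lemma kbox_subset_cube {a : Fin d → ℕ} (hkn : k ≤ n) (ha : ValidLoc n d k a) :
    kbox d k a ⊆ cube n d := by
  intro x hx i
  have h1 := hx i
  have h2 := ha i
  exact ⟨by omega, by omega⟩

lemma shift_mem_kbox {a j : Fin d → ℕ} (hk : 1 ≤ k) (hj : ∀ i, 1 ≤ j i ∧ j i ≤ k) :
    (fun i => a i + j i - 1) ∈ kbox d k a := by
  intro i
  have := hj i
  dsimp only
  exact ⟨by omega, by omega⟩

lemma hasCopyAt_congr {σ : Type*} {F : Set ((Fin d → ℕ) → σ)} {A1 A2 : (Fin d → ℕ) → σ}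
    {a : Fin d → ℕ} (hk : 1 ≤ k) (h : ∀ x ∈ kbox d k a, A1 x = A2 x)
    (hc : HasCopyAt d k F A1 a) : HasCopyAt d k F A2 a := by
  obtain ⟨Sp, hS, hall⟩ := hc
  refine ⟨Sp, hS, fun j hj => ?_⟩
  rw [← h _ (shift_mem_kbox hk hj)]
  exact hall j hj

lemma kbox_subset_closure {a p : Fin d → ℕ} {B : Set (Fin d → ℕ)} (hk : 1 ≤ k) (hkn : k ≤ n)
    (ha : ValidLoc n d k a) (hpk : p ∈ kbox d k a) (hpB : p ∈ B) :
    kbox d k a ⊆ blockClosure n d k B := by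
  intro x hx
  refine ⟨kbox_subset_cube hkn ha hx, p, hpB, fun i => ?_⟩
  have h1 := hx i
  have h2 := hpk i
  have h3 := ha i
  rw [natDist_def]
  omega

lemma intervalPartition_disj {w' : ℕ} {Q : IntervalPartition n w'} {v : ℕ} {j j' : Fin Q.t}
    (h : v ∈ Q.I j) (h' : v ∈ Q.I j') : j = j' := by
  rcases lt_trichotomy j j' with hlt | he | hlt
  · exact absurd (Q.ordered j j' hlt v h v h') (lt_irrefl v)
  · exact he
  · exact absurd (Q.ordered j' j hlt v h' v h) (lt_irrefl v)

lemma intervalPartition_Icc {w' : ℕ} (hkw : k ≤ w') {Q : IntervalPartition n w'} (j : Fin Q.t) :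
    ∃ a b, 1 ≤ a ∧ a + k ≤ b + 1 ∧ b ≤ n ∧ Q.I j = Finset.Icc a b := by
  obtain ⟨a, b, h1, h2, h3, h4⟩ := Q.interval j
  have hcard := Q.size j
  rw [h4, Nat.card_Icc] at hcard
  exact ⟨a, b, h1, by omega, h3, h4⟩

def NGv (k : ℕ) {n w' : ℕ} (Q : IntervalPartition n w') (v : ℕ) : Prop :=
  ∀ j, v ∉ takeSmallest (Q.I j) (k - 1)

lemma exists_ngv {w' : ℕ} (hk2 : 2 ≤ k) (hkw : k ≤ w') {Q : IntervalPartition n w'}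
    {c : ℕ} (hc1 : 1 ≤ c) (hc2 : c + k ≤ n + 1) :
    ∃ t, c ≤ t ∧ t + 1 ≤ c + k ∧ 1 ≤ t ∧ t ≤ n ∧ NGv k Q t := by
  obtain ⟨j, hj⟩ := Q.cover (c + k - 1) (by rw [Finset.mem_Icc]; omega)
  obtain ⟨a, b, ha1, hab, hbn, hIcc⟩ := intervalPartition_Icc hkw j
  by_cases hvt : c + k - 1 ∈ takeSmallest (Q.I j) (k - 1)
  · rw [hIcc] at hj
    rw [Finset.mem_Icc] at hj
    have hvt' := hvt
    rw [hIcc, mem_takeSmallest_Icc] at hvt'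
    refine ⟨a - 1, by omega, by omega, by omega, by omega, ?_⟩
    intro j' hj'
    have hj'I : a - 1 ∈ Q.I j' := takeSmallest_subset _ _ hj'
    obtain ⟨a', b', ha1', hab', hbn', hIcc'⟩ := intervalPartition_Icc hkw j'
    rw [hIcc', mem_takeSmallest_Icc] at hj'
    have hne : j' ≠ j := by
      intro he
      subst he
      rw [hIcc, Finset.mem_Icc] at hj'I
      omega
    rcases lt_or_gt_of_ne hne with hlt | hlt
    · -- j' < j : b' < a, b' = a - 1, contradiction with take membership
      have hb'j' : b' ∈ Q.I j' := by
        rw [hIcc', Finset.mem_Icc]; omega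
      have haj : a ∈ Q.I j := by
        rw [hIcc, Finset.mem_Icc]; omega
      have := Q.ordered j' j hlt b' hb'j' a haj
      omega
    · -- j < j' : elements of I j < elements of I j'
      have haj : a ∈ Q.I j := by
        rw [hIcc, Finset.mem_Icc]; omega
      have := Q.ordered j j' hlt a haj (a - 1) hj'I
      omega
  · refine ⟨c + k - 1, by omega, by omega, by omega, by omega, ?_⟩
    intro j' hj'
    have hmem : c + k - 1 ∈ Q.I j' := takeSmallest_subset _ _ hj'
    have : j' = j := intervalPartition_disj hmem hj
    subst this
    exact hvt hj'

lemma ngv_convex {w' : ℕ} (hk2 : 2 ≤ k) (hkw : k ≤ w') {Q : IntervalPartition n w'}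
    {u v z : ℕ} (hu : NGv k Q u) (hz : NGv k Q z) (h1 : u ≤ v) (h2 : v ≤ z)
    (h3 : z + 1 ≤ u + k) : NGv k Q v := by
  intro j hv
  obtain ⟨a, b, ha1, hab, hbn, hIcc⟩ := intervalPartition_Icc hkw j
  rw [hIcc, mem_takeSmallest_Icc] at hv
  have hu' := hu j
  have hz' := hz j
  rw [hIcc, mem_takeSmallest_Icc] at hu' hz'
  omega

lemma mem_nonGrid_iff {w' : ℕ} {Q : IntervalPartition n w'} {x : Fin d → ℕ} :
    x ∈ cube n d \ gridOf n d k w' Q ↔ x ∈ cube n d ∧ ∀ i, NGv k Q (x i) := by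
  constructor
  · rintro ⟨hc, hg⟩
    exact ⟨hc, fun i j hm => hg ⟨hc, i, j, hm⟩⟩
  · rintro ⟨hc, hng⟩
    refine ⟨hc, ?_⟩
    rintro ⟨-, i, j, hm⟩
    exact hng i j hm

end RepairAux
section RepairAux2

open Relation

variable {n d k : ℕ}

lemma move_one {w' : ℕ} (hk2 : 2 ≤ k) (hkw : k ≤ w') {Q : IntervalPartition n w'}
    {a : Fin d → ℕ} (ha : ∀ i, 1 ≤ a i ∧ a i + k ≤ n + 1) :
    ∀ c : ℕ, ∀ x : Fin d → ℕ, (∀ i, a i ≤ x i ∧ x i + 1 ≤ a i + k) → (∀ i, NGv k Q (x i)) →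
    ∀ (i0 : Fin d) (m : ℕ), a i0 ≤ m → m + 1 ≤ a i0 + k → NGv k Q m → Nat.dist (x i0) m ≤ c →
    Relation.ReflTransGen
      (fun p q => p ∈ cube n d \ gridOf n d k w' Q ∧ q ∈ cube n d \ gridOf n d k w' Q ∧
        Neighbor p q)
      x (Function.update x i0 m) := by
  intro c
  induction c with
  | zero =>
    intro x hxk hxng i0 m _ _ _ hdist
    have hm : m = x i0 := by rw [natDist_def] at hdist; omega
    subst hm
    rw [Function.update_eq_self]
  | succ c ih =>
    intro x hxk hxng i0 m hm1 hm2 hmng hdist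
    by_cases hxm : x i0 = m
    · rw [← hxm, Function.update_eq_self]
    · have h1 := hxk i0
      have h2 := ha i0
      set m' := if x i0 < m then x i0 + 1 else x i0 - 1 with hm'def
      have hbounds : a i0 ≤ m' ∧ m' + 1 ≤ a i0 + k := by
        rw [hm'def]; split_ifs <;> omega
      have hm'ng : NGv k Q m' := by
        by_cases hlt : x i0 < m
        · have he : m' = x i0 + 1 := by rw [hm'def, if_pos hlt]
          rw [he]
          exact ngv_convex hk2 hkw (hxng i0) hmng (by omega) (by omega) (by omega)
        · have he : m' = x i0 - 1 := by rw [hm'def, if_neg hlt]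
          rw [he]
          exact ngv_convex hk2 hkw hmng (hxng i0) (by omega) (by omega) (by omega)
      have hxmem : x ∈ cube n d \ gridOf n d k w' Q := by
        rw [mem_nonGrid_iff]
        exact ⟨fun i => by have := hxk i; have := ha i; exact ⟨by omega, by omega⟩, hxng⟩
      have hupdk : ∀ i, a i ≤ Function.update x i0 m' i ∧ Function.update x i0 m' i + 1 ≤ a i + k := by
        intro i
        by_cases hi : i = i0
        · subst hi; rw [Function.update_self]; exact hbounds
        · rw [Function.update_of_ne hi]; exact hxk i
      have hupdng : ∀ i, NGv k Q (Function.update x i0 m' i) := by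
        intro i
        by_cases hi : i = i0
        · subst hi; rw [Function.update_self]; exact hm'ng
        · rw [Function.update_of_ne hi]; exact hxng i
      have hx'mem : Function.update x i0 m' ∈ cube n d \ gridOf n d k w' Q := by
        rw [mem_nonGrid_iff]
        exact ⟨fun i => by have := hupdk i; have := ha i; exact ⟨by omega, by omega⟩, hupdng⟩
      have hdist1 : Nat.dist (x i0) m' = 1 := by
        rw [natDist_def, hm'def]; split_ifs <;> omega
      have hnb : Neighbor x (Function.update x i0 m') := neighbor_update _ _ _ hdist1
      have hrec := ih (Function.update x i0 m') hupdk hupdng i0 m hm1 hm2 hmng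
        (by rw [Function.update_self, natDist_def]
            rw [natDist_def] at hdist
            rw [hm'def]; split_ifs <;> omega)
      rw [Function.update_idem] at hrec
      exact Relation.ReflTransGen.head ⟨hxmem, hx'mem, hnb⟩ hrec

lemma window_conn_aux {w' : ℕ} (hk2 : 2 ≤ k) (hkw : k ≤ w') {Q : IntervalPartition n w'}
    {a : Fin d → ℕ} (ha : ∀ i, 1 ≤ a i ∧ a i + k ≤ n + 1) :
    ∀ c : ℕ, ∀ x y : Fin d → ℕ,
      (∀ i, a i ≤ x i ∧ x i + 1 ≤ a i + k) → (∀ i, NGv k Q (x i)) →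
      (∀ i, a i ≤ y i ∧ y i + 1 ≤ a i + k) → (∀ i, NGv k Q (y i)) →
      (Finset.univ.filter fun i => x i ≠ y i).card ≤ c →
      Relation.ReflTransGen
        (fun p q => p ∈ cube n d \ gridOf n d k w' Q ∧ q ∈ cube n d \ gridOf n d k w' Q ∧
          Neighbor p q) x y := by
  intro c
  induction c with
  | zero =>
    intro x y hxk hxng hyk hyng hcard
    have hxy : x = y := by
      funext i
      by_contra hne
      have hmem : i ∈ Finset.univ.filter fun i => x i ≠ y i := by
        simp only [Finset.mem_filter, Finset.mem_univ, true_and]; exact hne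
      have := Finset.card_pos.mpr ⟨i, hmem⟩
      omega
    rw [hxy]
  | succ c ih =>
    intro x y hxk hxng hyk hyng hcard
    by_cases hxy : ∀ i, x i = y i
    · rw [funext hxy]
    · push_neg at hxy
      obtain ⟨i0, hne⟩ := hxy
      have hpath1 := move_one hk2 hkw ha (Nat.dist (x i0) (y i0)) x hxk hxng i0 (y i0)
        (hyk i0).1 (hyk i0).2 (hyng i0) le_rfl
      have hupdk : ∀ i, a i ≤ Function.update x i0 (y i0) i ∧
          Function.update x i0 (y i0) i + 1 ≤ a i + k := by
        intro i
        by_cases hi : i = i0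
        · subst hi; rw [Function.update_self]; exact hyk i
        · rw [Function.update_of_ne hi]; exact hxk i
      have hupdng : ∀ i, NGv k Q (Function.update x i0 (y i0) i) := by
        intro i
        by_cases hi : i = i0
        · subst hi; rw [Function.update_self]; exact hyng i
        · rw [Function.update_of_ne hi]; exact hxng i
      have hcard' : (Finset.univ.filter fun i => Function.update x i0 (y i0) i ≠ y i).card ≤ c := by
        have hsub : (Finset.univ.filter fun i => Function.update x i0 (y i0) i ≠ y i) ⊆
            (Finset.univ.filter fun i => x i ≠ y i).erase i0 := by
          intro i hi
          simp only [Finset.mem_filter, Finset.mem_univ, true_and] at hi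
          have hii0 : i ≠ i0 := by
            intro he; subst he; rw [Function.update_self] at hi; exact hi rfl
          rw [Function.update_of_ne hii0] at hi
          rw [Finset.mem_erase]
          exact ⟨hii0, by simp only [Finset.mem_filter, Finset.mem_univ, true_and]; exact hi⟩
        have hle := Finset.card_le_card hsub
        have hmem : i0 ∈ Finset.univ.filter fun i => x i ≠ y i := by
          simp only [Finset.mem_filter, Finset.mem_univ, true_and]; exact hne
        have := Finset.card_erase_of_mem hmem
        omega
      exact hpath1.trans (ih (Function.update x i0 (y i0)) y hupdk hupdng hyk hyng hcard')

lemma grid_window_exists {w'' : ℕ} (hk2 : 2 ≤ k) (hkw : k ≤ w'')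
    {G : Set (Fin d → ℕ)} (hG : IsGrid n d k w'' G) {a : Fin d → ℕ} (hkn : k ≤ n)
    (ha : ValidLoc n d k a) :
    ∃ t ∈ kbox d k a, t ∈ cube n d \ G := by
  obtain ⟨Q, rfl⟩ := hG
  have hex : ∀ i : Fin d, ∃ t, a i ≤ t ∧ t + 1 ≤ a i + k ∧ 1 ≤ t ∧ t ≤ n ∧ NGv k Q t := by
    intro i
    have := ha i
    exact exists_ngv hk2 hkw (by omega) (by omega)
  choose t h1 h2 h3 h4 h5 using hex
  refine ⟨t, fun i => ⟨h1 i, by have := h2 i; omega⟩, ?_⟩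
  rw [mem_nonGrid_iff]
  exact ⟨fun i => ⟨h3 i, h4 i⟩, h5⟩

lemma grid_window_conn {w'' : ℕ} (hk2 : 2 ≤ k) (hkw : k ≤ w'')
    {G : Set (Fin d → ℕ)} (hG : IsGrid n d k w'' G) {a : Fin d → ℕ} (hkn : k ≤ n)
    (ha : ValidLoc n d k a) {x y : Fin d → ℕ}
    (hx1 : x ∈ kbox d k a) (hx2 : x ∈ cube n d \ G)
    (hy1 : y ∈ kbox d k a) (hy2 : y ∈ cube n d \ G) :
    Relation.ReflTransGen
      (fun p q => p ∈ cube n d \ G ∧ q ∈ cube n d \ G ∧ Neighbor p q) x y := by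
  obtain ⟨Q, rfl⟩ := hG
  rw [mem_nonGrid_iff] at hx2 hy2
  have ha' : ∀ i, 1 ≤ a i ∧ a i + k ≤ n + 1 := fun i => by have := ha i; omega
  exact window_conn_aux hk2 hkw ha' _ x y
    (fun i => ⟨(hx1 i).1, by have := (hx1 i).2; have := ha' i; omega⟩) hx2.2
    (fun i => ⟨(hy1 i).1, by have := (hy1 i).2; have := ha' i; omega⟩) hy2.2
    le_rfl

end RepairAux2

section RepairAux3

def PatchBlock {σ : Type*} (n d k w : ℕ) (S : GridSystem n d k w)
    (F : Set ((Fin d → ℕ) → σ)) (A : (Fin d → ℕ) → σ) (ℓ : ℕ) (P : Set (Fin d → ℕ)) : Prop :=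
  IsBlock n d (S.G ℓ) P ∧
    ∃ i B, IsMaximalWitness n d k w S F A i B ∧ ℓ = i + 1 ∧ B ⊆ P

lemma exists_maximal_above {σ : Type*} {n d k w : ℕ} {S : GridSystem n d k w}
    {F : Set ((Fin d → ℕ) → σ)} {A : (Fin d → ℕ) → σ} :
    ∀ (c i : ℕ) (B : Set (Fin d → ℕ)), IsWitness n d k w S F A i B → sysR n w - i ≤ c →
      ∃ i' B', IsMaximalWitness n d k w S F A i' B' ∧ i ≤ i' ∧ B ⊆ B' := by
  intro c
  induction c with
  | zero =>
    intro i B hw hle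
    have hir : i = sysR n w := le_antisymm hw.1 (by omega)
    refine ⟨i, B, ⟨hw, ?_⟩, le_rfl, subset_rfl⟩
    intro j hj hjr B' _ _
    exact absurd hjr (by omega)
  | succ c ih =>
    intro i B hw hle
    by_cases hm : ∀ j, i < j → j ≤ sysR n w → ∀ B', IsBlock n d (S.G j) B' → B ⊆ B' →
        ¬ Unrepairable n d k F A B'
    · exact ⟨i, B, ⟨hw, hm⟩, le_rfl, subset_rfl⟩
    · push_neg at hm
      obtain ⟨j, hij, hjr, B', hB', hBB', hunrep⟩ := hm
      have hw' : IsWitness n d k w S F A j B' := ⟨hjr, hB', Or.inr ⟨by omega, hunrep⟩⟩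
      obtain ⟨i', B'', hmax, hle', hsub'⟩ := ih j B' hw' (by omega)
      exact ⟨i', B'', hmax, by omega, hBB'.trans hsub'⟩

end RepairAux3
/-- For a nonempty `k`-local property `P(F)`, one can make `A`
satisfy `P(F)` by modifying entries only inside `⋃_{B ∈ W} Par(B)`, where `W` is the
family of all maximal `(P,A)`-witness blocks. -/
theorem repair_inside_parents_of_maximal_witnesses (n d k w : ℕ) (hd : 1 ≤ d)
    (hk : 2 ≤ k) (hkw : k ≤ w) (hwn : w ≤ n) {σ : Type*}
    (F : Set ((Fin d → ℕ) → σ))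
    (hP : ∃ A₀ : (Fin d → ℕ) → σ, SatisfiesP n d k F A₀)
    (A : (Fin d → ℕ) → σ) (S : GridSystem n d k w) :
    ∃ A' : (Fin d → ℕ) → σ, SatisfiesP n d k F A' ∧
      ∀ x : Fin d → ℕ,
        x ∉ {y | ∃ (i : ℕ) (B : Set (Fin d → ℕ)),
          IsMaximalWitness n d k w S F A i B ∧ y ∈ parentSet n d k w S i B} →
        A' x = A x := by
  classical
  have hkn : k ≤ n := hkw.trans hwn
  have hk1 : 1 ≤ k := by omega
  -- width bounds at every level
  have h2r : 2 ^ sysR n w ≤ n / w :=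
    Nat.pow_log_le_self 2 (Nat.div_pos hwn (by omega)).ne'
  have hwr : w ≤ n / 2 ^ sysR n w := by
    rw [Nat.le_div_iff_mul_le (Nat.two_pow_pos _)]
    calc w * 2 ^ sysR n w ≤ w * (n / w) := by
          exact Nat.mul_le_mul_left w h2r
      _ ≤ n := by
          rw [mul_comm]; exact Nat.div_mul_le_self n w
  have hk' : ∀ ℓ, ℓ ≤ sysR n w → k ≤ n / 2 ^ (sysR n w - ℓ) := by
    intro ℓ _
    refine hkw.trans (hwr.trans ?_)
    exact Nat.div_le_div_left
      (Nat.pow_le_pow_right (by norm_num) (Nat.sub_le _ _))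
      (Nat.two_pow_pos _)
  by_cases Htop : ∃ B, IsMaximalWitness n d k w S F A (sysR n w) B
  · -- Case I : a maximal witness at the top level; its parent is the full cube.
    obtain ⟨A₀, hA₀⟩ := hP
    obtain ⟨Bt, hBt⟩ := Htop
    refine ⟨fun x => if x ∈ cube n d then A₀ x else A x, ?_, ?_⟩
    · rintro ⟨a, ha, hcopy⟩
      refine hA₀ ⟨a, ha, ?_⟩
      exact hasCopyAt_congr hk1
        (fun x hx => if_pos (kbox_subset_cube hkn ha hx)) hcopy
    · intro x hx
      have hxc : x ∉ cube n d := by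
        intro hc
        refine hx ⟨sysR n w, Bt, hBt, ?_⟩
        unfold parentSet
        rw [if_pos rfl]
        exact hc
      simp only [hxc, if_false]
  · -- Case II : all maximal witnesses live strictly below the top level.
    have hmw_lt : ∀ i B, IsMaximalWitness n d k w S F A i B → i < sysR n w := by
      intro i B h
      rcases lt_or_eq_of_le h.1.1 with hlt | he
      · exact hlt
      · exact absurd ⟨B, he ▸ h⟩ Htop
    set U : Set (Fin d → ℕ) := {y | ∃ (i : ℕ) (B : Set (Fin d → ℕ)),
      IsMaximalWitness n d k w S F A i B ∧ y ∈ parentSet n d k w S i B} with hUdef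
    have hU_iff : ∀ x, x ∈ U ↔ ∃ ℓ P, PatchBlock n d k w S F A ℓ P ∧ x ∈ P := by
      intro x
      constructor
      · rintro ⟨i, B, hmw, hx⟩
        have hir := hmw_lt i B hmw
        unfold parentSet at hx
        rw [if_neg (by omega)] at hx
        obtain ⟨P, ⟨hPb, hBP⟩, hxP⟩ := hx
        exact ⟨i + 1, P, ⟨hPb, i, B, hmw, rfl, hBP⟩, hxP⟩
      · rintro ⟨ℓ, P, ⟨hPb, i, B, hmw, rfl, hBP⟩, hxP⟩
        refine ⟨i, B, hmw, ?_⟩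
        unfold parentSet
        rw [if_neg (by have := hmw_lt i B hmw; omega)]
        exact ⟨P, ⟨hPb, hBP⟩, hxP⟩
    have patch_le : ∀ ℓ P, PatchBlock n d k w S F A ℓ P → 1 ≤ ℓ ∧ ℓ ≤ sysR n w := by
      rintro ℓ P ⟨_, i, B, hmw, rfl, _⟩
      have := hmw_lt i B hmw
      omega
    have patch_rep : ∀ ℓ P, PatchBlock n d k w S F A ℓ P →
        ∃ A1 : (Fin d → ℕ) → σ, (∀ x ∈ blockBoundary n d k P, A1 x = A x) ∧
          ¬ HasCopyIn n d k F A1 (blockClosure n d k P) := by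
      rintro ℓ P ⟨hPb, i, B, hmw, rfl, hBP⟩
      have hir := hmw_lt i B hmw
      have hnot := hmw.2 (i + 1) (by omega) (by omega) P hPb hBP
      unfold Unrepairable at hnot
      push_neg at hnot
      exact hnot
    have hrepF : ∀ p : ℕ × Set (Fin d → ℕ), ∃ A1 : (Fin d → ℕ) → σ,
        PatchBlock n d k w S F A p.1 p.2 →
          ((∀ x ∈ blockBoundary n d k p.2, A1 x = A x) ∧
            ¬ HasCopyIn n d k F A1 (blockClosure n d k p.2)) := by
      intro p
      by_cases h : PatchBlock n d k w S F A p.1 p.2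
      · obtain ⟨A1, h1, h2⟩ := patch_rep p.1 p.2 h
        exact ⟨A1, fun _ => ⟨h1, h2⟩⟩
      · exact ⟨A, fun hh => absurd hh h⟩
    choose Rep hRep using hrepF
    set lev : (Fin d → ℕ) → ℕ := fun x =>
      Nat.findGreatest (fun ℓ => ∃ P, PatchBlock n d k w S F A ℓ P ∧ x ∈ P) (sysR n w)
      with hlevdef
    have hlev_spec : ∀ x : Fin d → ℕ, ∀ ℓ P, PatchBlock n d k w S F A ℓ P → x ∈ P →
        ∃ P', PatchBlock n d k w S F A (lev x) P' ∧ x ∈ P' := by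
      intro x ℓ P hp hxP
      simp only [hlevdef]
      exact Nat.findGreatest_spec
        (P := fun ℓ => ∃ P', PatchBlock n d k w S F A ℓ P' ∧ x ∈ P')
        (patch_le ℓ P hp).2 ⟨P, hp, hxP⟩
    have hlev_le : ∀ x : Fin d → ℕ, ∀ ℓ P, PatchBlock n d k w S F A ℓ P → x ∈ P →
        ℓ ≤ lev x := by
      intro x ℓ P hp hxP
      simp only [hlevdef]
      exact Nat.le_findGreatest (patch_le ℓ P hp).2 ⟨P, hp, hxP⟩
    have hlevU : ∀ x, x ∈ U → ∃ P, PatchBlock n d k w S F A (lev x) P ∧ x ∈ P := by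
      intro x hx
      obtain ⟨ℓ, P, hp, hxP⟩ := (hU_iff x).1 hx
      exact hlev_spec x ℓ P hp hxP
    have hlev' : ∀ x : Fin d → ℕ, ∃ P : Set (Fin d → ℕ),
        x ∈ U → (PatchBlock n d k w S F A (lev x) P ∧ x ∈ P) := by
      intro x
      by_cases hx : x ∈ U
      · obtain ⟨P, h⟩ := hlevU x hx
        exact ⟨P, fun _ => h⟩
      · exact ⟨∅, fun h => absurd h hx⟩
    choose Pb hPb using hlev'
    refine ⟨fun x => if x ∈ U then Rep (lev x, Pb x) x else A x, ?_, ?_⟩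
    · -- SatisfiesP
      rintro ⟨a, ha, hcopy⟩
      have hkboxcube : kbox d k a ⊆ cube n d := kbox_subset_cube hkn ha
      by_cases hmeet : ∃ x ∈ kbox d k a, x ∈ U
      · -- the box touches a patched region
        obtain ⟨x0, hx0k, hx0U⟩ := hmeet
        have hx0P := hPb x0 hx0U
        set lw : ℕ := Nat.findGreatest
          (fun ℓ => ∃ P, PatchBlock n d k w S F A ℓ P ∧ ∃ p ∈ P, p ∈ kbox d k a) (sysR n w)
          with hlwdef
        have hlw_le : ∀ ℓ P, PatchBlock n d k w S F A ℓ P → (∃ p ∈ P, p ∈ kbox d k a) →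
            ℓ ≤ lw := by
          intro ℓ P hp hmem
          simp only [hlwdef]
          exact Nat.le_findGreatest (patch_le ℓ P hp).2 ⟨P, hp, hmem⟩
        have hlw : ∃ P, PatchBlock n d k w S F A lw P ∧ ∃ p ∈ P, p ∈ kbox d k a := by
          simp only [hlwdef]
          exact Nat.findGreatest_spec
            (P := fun ℓ => ∃ P, PatchBlock n d k w S F A ℓ P ∧ ∃ p ∈ P, p ∈ kbox d k a)
            (patch_le _ _ hx0P.1).2 ⟨Pb x0, hx0P.1, x0, hx0P.2, hx0k⟩
        obtain ⟨Pst, hPst, pst, hpstP, hpstk⟩ := hlw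
        have hlwr := patch_le _ _ hPst
        have hGst := S.isGrid lw hlwr.2
        have hkwst := hk' lw hlwr.2
        -- any point of the box outside the grid at level lw lies in Pst
        have hinP : ∀ x, x ∈ kbox d k a → x ∈ cube n d \ S.G lw → x ∈ Pst := by
          intro x hxk hxg
          exact mem_of_path hPst.1 hpstP
            (grid_window_conn hk hkwst hGst hkn ha hpstk (hPst.1.2.1 hpstP) hxk hxg)
        have hbd := hRep (lw, Pst) hPst
        have hclo : kbox d k a ⊆ blockClosure n d k Pst :=
          kbox_subset_closure hk1 hkn ha hpstk hpstP
        have hkey : ∀ x ∈ kbox d k a,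
            (if x ∈ U then Rep (lev x, Pb x) x else A x) = Rep (lw, Pst) x := by
          intro x hxk
          by_cases hxU : x ∈ U
          · rw [if_pos hxU]
            have hx := hPb x hxU
            have h1 : lev x ≤ lw := hlw_le (lev x) (Pb x) hx.1 ⟨x, hx.2, hxk⟩
            have hxfree : x ∈ cube n d \ S.G lw := by
              have hxf := hx.1.1.2.1 hx.2
              exact ⟨hxf.1, fun hg => hxf.2 (S.nested lw (lev x) h1 hlwr.2 hg)⟩
            have hxPst : x ∈ Pst := hinP x hxk hxfree
            have h2 : lw ≤ lev x := hlev_le x lw Pst hPst hxPst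
            have h3 : lev x = lw := le_antisymm h1 h2
            have hBlw : IsBlock n d (S.G lw) (Pb x) := by rw [← h3]; exact hx.1.1
            have h4 : Pb x = Pst := block_eq_of_mem hBlw hPst.1 hx.2 hxPst
            rw [h3, h4]
          · rw [if_neg hxU]
            have hxcl : x ∈ blockClosure n d k Pst := hclo hxk
            have hxnP : x ∉ Pst := fun hin => hxU ((hU_iff x).2 ⟨lw, Pst, hPst, hin⟩)
            exact (hbd.1 x ⟨hxcl, hxnP⟩).symm
        exact hbd.2 ⟨a, ha, hasCopyAt_congr hk1 hkey hcopy, hclo⟩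
      · -- the box misses all patched regions: find a level-0 witness, contradiction
        push_neg at hmeet
        have hAcopy : HasCopyAt d k F A a := by
          refine hasCopyAt_congr hk1 (fun x hx => ?_) hcopy
          rw [if_neg (hmeet x hx)]
        obtain ⟨t, htk, htg⟩ :=
          grid_window_exists hk (hk' 0 (Nat.zero_le _)) (S.isGrid 0 (Nat.zero_le _)) hkn ha
        have hB0 : IsBlock n d (S.G 0) (compBlock n d (S.G 0) t) := compBlock_isBlock htg
        have htB0 : t ∈ compBlock n d (S.G 0) t := mem_compBlock_self htg
        have hwit : IsWitness n d k w S F A 0 (compBlock n d (S.G 0) t) :=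
          ⟨Nat.zero_le _, hB0,
            Or.inl ⟨rfl, a, ha, hAcopy, kbox_subset_closure hk1 hkn ha htk htB0⟩⟩
        obtain ⟨i', B', hmw', _, hsub⟩ :=
          exists_maximal_above (sysR n w) 0 (compBlock n d (S.G 0) t) hwit (by omega)
        have hi'r := hmw_lt i' B' hmw'
        have hGG : cube n d \ S.G i' ⊆ cube n d \ S.G (i' + 1) := by
          intro z hz
          exact ⟨hz.1, fun hg => hz.2 (S.nested (i' + 1) i' (by omega) (by omega) hg)⟩
        have htB' : t ∈ B' := hsub htB0
        have htc : t ∈ cube n d \ S.G (i' + 1) := hGG (hmw'.1.2.1.2.1 htB')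
        have htU : t ∈ U := by
          refine ⟨i', B', hmw', ?_⟩
          unfold parentSet
          rw [if_neg (by omega)]
          exact ⟨compBlock n d (S.G (i' + 1)) t,
            ⟨compBlock_isBlock htc, block_subset_compBlock hmw'.1.2.1 hGG htB'⟩,
            mem_compBlock_self htc⟩
        exact hmeet t htk htU
    · intro x hx
      exact if_neg hx
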